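/- If a graph G is word-representable, then for any vertex v of G there exists a semi-transitive orientation of G in which v is a source (all edges incident to v are directed away from v). -/

import Mathlib

/-- `D` is an orientation of `G`: directed edges lie on edges of `G`, and each
edge of `G` gets exactly one direction. -/
def IsOrientation {V : Type*} (G : SimpleGraph V) (D : V → V → Prop) : Prop :=
  (∀ u v, D u v → G.Adj u v) ∧ ∀ u v, G.Adj u v → (D u v ↔ ¬ D v u)

/-- `D` is semi-transitive: acyclic, and for every directed path
`p 0 → p 1 → ⋯ → p k` such that `p 0 → p k` is a directed edge, all the
edges `p i → p j` for `i < j ≤ k` are present. -/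
def IsSemiTransitive {V : Type*} (D : V → V → Prop) : Prop :=
  (∀ v, ¬ Relation.TransGen D v v) ∧
    ∀ (k : ℕ) (p : ℕ → V), (∀ i < k, D (p i) (p (i + 1))) → D (p 0) (p k) →
      ∀ i j, i < j → j ≤ k → D (p i) (p j)

/-- Letters `i` and `j` alternate in word `w`. -/
def Alternate {α : Type*} [DecidableEq α] (w : List α) (i j : α) : Prop :=
  (w.filter (fun x => decide (x = i ∨ x = j))).Chain' (· ≠ ·)

/-- A word `w` over `V(G)` represents `G`. -/
def Represents {V : Type*} [DecidableEq V] (w : List V) (G : SimpleGraph V) : Prop :=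
  (∀ v, v ∈ w) ∧ ∀ i j : V, i ≠ j → (Alternate w i j ↔ G.Adj i j)

/-- `G` is word-representable. -/
def WordRepresentable {V : Type*} [DecidableEq V] (G : SimpleGraph V) : Prop :=
  ∃ w, Represents w G


section Aux

variable {V : Type*} [DecidableEq V]

/-- Number of occurrences of `x` among the first `n` letters of `w`. -/
def Cnt (w : List V) (x : V) (n : ℕ) : ℕ := (w.take n).count x

/-- `x` and `y` alternate in `w` with `x` coming first, expressed by prefix counts. -/
def Arel (w : List V) (x y : V) : Prop :=
  ∀ n, Cnt w y n ≤ Cnt w x n ∧ Cnt w x n ≤ Cnt w y n + 1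

lemma Cnt_zero (w : List V) (x : V) : Cnt w x 0 = 0 := rfl

lemma Cnt_nil (x : V) (n : ℕ) : Cnt ([] : List V) x n = 0 := by
  simp [Cnt]

lemma Cnt_cons_succ (a : V) (l : List V) (x : V) (n : ℕ) :
    Cnt (a :: l) x (n + 1) = (if a = x then 1 else 0) + Cnt l x n := by
  simp only [Cnt, List.take_succ_cons, List.count_cons]
  rcases eq_or_ne a x with h | h <;> simp [h] <;> omega

lemma Arel_nil (x y : V) : Arel ([] : List V) x y := by
  intro n; simp [Cnt_nil]

lemma not_Arel_y_cons {x y : V} (hxy : x ≠ y) (l : List V) : ¬ Arel (y :: l) x y := by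
  intro h
  have h1 := (h 1).1
  rw [Cnt_cons_succ, Cnt_cons_succ] at h1
  simp [hxy, hxy.symm, Cnt_zero] at h1

lemma Arel_single {x y : V} (hxy : x ≠ y) : Arel ([x] : List V) x y := by
  intro n
  cases n with
  | zero => simp [Cnt_zero]
  | succ m =>
    rw [Cnt_cons_succ, Cnt_cons_succ]
    simp [hxy, hxy.symm, Cnt_nil]

lemma Arel_cons_cons_iff {x y : V} (hxy : x ≠ y) (t : List V) :
    Arel (x :: y :: t) x y ↔ Arel t x y := by
  constructor
  · intro h n
    have := h (n + 2)
    rw [Cnt_cons_succ, Cnt_cons_succ, Cnt_cons_succ, Cnt_cons_succ] at this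
    simp [hxy, hxy.symm] at this
    omega
  · intro h n
    match n with
    | 0 => simp [Cnt_zero]
    | 1 =>
      rw [Cnt_cons_succ, Cnt_cons_succ]
      simp [hxy, hxy.symm, Cnt_zero]
    | (m + 2) =>
      have := h m
      rw [Cnt_cons_succ, Cnt_cons_succ, Cnt_cons_succ, Cnt_cons_succ]
      simp [hxy, hxy.symm]
      omega

lemma not_Arel_xx {x y : V} (hxy : x ≠ y) (t : List V) : ¬ Arel (x :: x :: t) x y := by
  intro h
  have h2 := (h 2).2
  rw [Cnt_cons_succ, Cnt_cons_succ, Cnt_cons_succ, Cnt_cons_succ] at h2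
  simp [hxy, hxy.symm, Cnt_zero] at h2

lemma chain_to_Arel {x y : V} (hxy : x ≠ y) :
    ∀ t : List V, (∀ z ∈ t, z = x ∨ z = y) → t.Chain' (· ≠ ·) →
      (t = [] ∨ t.head? = some x) → Arel t x y
  | [] => fun _ _ _ => Arel_nil x y
  | [a] => by
    rintro hm _ (h | h)
    · simp at h
    · simp only [List.head?_cons, Option.some.injEq] at h
      rw [h]
      exact Arel_single hxy
  | a :: b :: t => by
    rintro hm hc (h | h)
    · simp at h
    · simp only [List.head?_cons, Option.some.injEq] at h
      rw [List.Chain', List.isChain_cons_cons] at hc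
      have hb : b = y := by
        rcases hm b (by simp) with h' | h'
        · exact absurd (h ▸ h').symm hc.1
        · exact h'
      rw [h, hb]
      rw [h, hb] at hm hc
      rw [Arel_cons_cons_iff hxy]
      have hc2 := hc.2
      rw [List.isChain_cons] at hc2
      refine chain_to_Arel hxy t (fun z hz => hm z (by simp [hz])) hc2.2 ?_
      cases ht : t.head? with
      | none => exact Or.inl (List.head?_eq_none_iff.mp ht)
      | some c =>
        right
        have hcy : c ≠ y := fun hh => hc2.1 c ht hh.symm
        have : c ∈ t := List.mem_of_mem_head? ht
        rcases hm c (by simp [this]) with h' | h'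
        · rw [h']
        · exact absurd h' hcy

lemma Arel_to_chain {x y : V} (hxy : x ≠ y) :
    ∀ t : List V, (∀ z ∈ t, z = x ∨ z = y) → Arel t x y → t.Chain' (· ≠ ·)
  | [] => fun _ _ => List.isChain_nil
  | [a] => fun _ _ => List.isChain_singleton a
  | a :: b :: t => by
    intro hm h
    have ha : a = x := by
      rcases hm a (by simp) with h' | h'
      · exact h'
      · rw [h'] at h; exact absurd h (not_Arel_y_cons hxy _)
    rw [ha] at h hm ⊢
    have hb : b = y := by
      rcases hm b (by simp) with h' | h'
      · rw [h'] at h; exact absurd h (not_Arel_xx hxy _)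
      · exact h'
    rw [hb] at h hm ⊢
    have ht : Arel t x y := (Arel_cons_cons_iff hxy _).mp h
    have hct : t.Chain' (· ≠ ·) :=
      Arel_to_chain hxy t (fun z hz => hm z (by simp [hz])) ht
    rw [List.Chain', List.isChain_cons_cons]
    refine ⟨hxy, ?_⟩
    rw [List.isChain_cons]
    refine ⟨?_, hct⟩
    intro c hc hyc
    have hc' : t.head? = some c := hc
    have : c ∈ t := List.mem_of_mem_head? hc'
    obtain ⟨t', rfl⟩ : ∃ t', t = c :: t' := by
      cases t with
      | nil => simp at hc'
      | cons d t' =>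
        simp only [List.head?_cons, Option.some.injEq] at hc'
        exact ⟨t', by rw [hc']⟩
    rw [← hyc] at ht
    exact not_Arel_y_cons hxy _ ht

lemma filter_take_prefix (p : V → Bool) (w : List V) (n : ℕ) :
    (w.take n).filter p <+: w.filter p := by
  conv_rhs => rw [← List.take_append_drop n w]
  rw [List.filter_append]
  exact List.prefix_append _ _

lemma exists_filter_take (p : V → Bool) :
    ∀ (w : List V) (n : ℕ), ∃ m, (w.take m).filter p = (w.filter p).take n := by
  intro w
  induction w with
  | nil => intro n; exact ⟨0, by simp⟩
  | cons a l ih =>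
    intro n
    by_cases hp : p a
    · match n with
      | 0 => exact ⟨0, by simp⟩
      | n' + 1 =>
        obtain ⟨m', hm'⟩ := ih n'
        exact ⟨m' + 1, by simp [hp, List.filter_cons, hm']⟩
    · obtain ⟨m', hm'⟩ := ih n
      exact ⟨m' + 1, by simp [hp, List.filter_cons, hm']⟩

lemma Arel_filter {x y : V} (p : V → Bool) (hx : p x = true) (hy : p y = true) (w : List V) :
    Arel w x y ↔ Arel (w.filter p) x y := by
  constructor
  · intro h n
    obtain ⟨m, hm⟩ := exists_filter_take p w n
    have cx : Cnt (w.filter p) x n = Cnt w x m := by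
      rw [Cnt, ← hm, List.count_filter hx]; rfl
    have cy : Cnt (w.filter p) y n = Cnt w y m := by
      rw [Cnt, ← hm, List.count_filter hy]; rfl
    rw [cx, cy]
    exact h m
  · intro h n
    have hpre := filter_take_prefix p w n
    have heq : (w.take n).filter p = (w.filter p).take ((w.take n).filter p).length :=
      List.prefix_iff_eq_take.mp hpre
    have cx : Cnt w x n = Cnt (w.filter p) x (((w.take n).filter p).length) := by
      rw [Cnt, Cnt, ← heq, List.count_filter hx]
    have cy : Cnt w y n = Cnt (w.filter p) y (((w.take n).filter p).length) := by
      rw [Cnt, Cnt, ← heq, List.count_filter hy]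
    rw [cx, cy]
    exact h _

lemma alternate_iff_Arel {x y : V} (hxy : x ≠ y) (w : List V) :
    Alternate w x y ↔ Arel w x y ∨ Arel w y x := by
  set p : V → Bool := fun z => decide (z = x ∨ z = y) with hp
  have hx : p x = true := by simp [hp]
  have hy : p y = true := by simp [hp]
  have hmem : ∀ z ∈ w.filter p, z = x ∨ z = y := by
    intro z hz
    have := List.of_mem_filter hz
    simpa [hp] using this
  constructor
  · intro hch
    cases hs : (w.filter p).head? with
    | none =>
      left
      rw [Arel_filter p hx hy, List.head?_eq_none_iff.mp hs]
      intro n; simp [Cnt]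
    | some a =>
      rcases hmem a (List.mem_of_mem_head? hs) with rfl | rfl
      · left
        rw [Arel_filter p hx hy]
        exact chain_to_Arel hxy _ hmem hch (Or.inr hs)
      · right
        rw [Arel_filter p hy hx]
        exact chain_to_Arel hxy.symm _ (fun z hz => (hmem z hz).symm) hch (Or.inr hs)
  · rintro (h | h)
    · exact Arel_to_chain hxy _ hmem ((Arel_filter p hx hy w).mp h)
    · exact Arel_to_chain hxy.symm _ (fun z hz => (hmem z hz).symm) ((Arel_filter p hy hx w).mp h)

-- indexOf lemmas
lemma not_mem_take_indexOf (w : List V) (a : V) : a ∉ w.take (w.idxOf a) := by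
  induction w with
  | nil => simp
  | cons b l ih =>
    by_cases hb : b = a
    · subst hb; rw [List.idxOf_cons_self]; simp
    · rw [List.idxOf_cons_ne _ (by exact fun h => hb h)]
      rw [List.take_succ_cons]
      simp only [List.mem_cons, not_or]
      exact ⟨fun h => hb h.symm, ih⟩

lemma mem_take_indexOf_succ {w : List V} {a : V} (h : a ∈ w) :
    a ∈ w.take (w.idxOf a + 1) := by
  induction w with
  | nil => simp at h
  | cons b l ih =>
    by_cases hb : b = a
    · subst hb; rw [List.idxOf_cons_self]; simp
    · rw [List.idxOf_cons_ne _ (by exact fun h => hb h), List.take_succ_cons]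
      rcases List.mem_cons.mp h with h' | h'
      · exact absurd h'.symm hb
      · exact List.mem_cons_of_mem _ (ih h')

lemma indexOf_lt_of_mem_take {w : List V} {a : V} {n : ℕ} (h : a ∈ w.take n) :
    w.idxOf a < n := by
  by_contra hle
  push_neg at hle
  have : w.take n = (w.take (w.idxOf a)).take n := by
    rw [List.take_take, min_eq_left hle]
  rw [this] at h
  exact not_mem_take_indexOf w a (List.mem_of_mem_take h)

lemma getElem?_indexOf_self {w : List V} {a : V} (h : a ∈ w) :
    w[w.idxOf a]? = some a := by
  have h1 : a ∈ w.take (w.idxOf a + 1) := mem_take_indexOf_succ h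
  rw [List.take_succ] at h1
  rcases List.mem_append.mp h1 with h' | h'
  · exact absurd h' (not_mem_take_indexOf w a)
  · cases hg : w[w.idxOf a]? with
    | none => rw [hg] at h'; simp at h'
    | some b => rw [hg] at h'; simp at h'; rw [h']

lemma Cnt_pos_of_mem_take {w : List V} {a : V} {n : ℕ} (h : a ∈ w.take n) :
    0 < Cnt w a n := List.count_pos_iff.mpr h

lemma mem_take_of_Cnt_pos {w : List V} {a : V} {n : ℕ} (h : 0 < Cnt w a n) :
    a ∈ w.take n := List.count_pos_iff.mp h

lemma Arel_indexOf_lt {w : List V} {x y : V} (h : Arel w x y) (hxy : x ≠ y)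
    (hyw : y ∈ w) : w.idxOf x < w.idxOf y := by
  set j := w.idxOf y with hj
  have hyt : y ∈ w.take (j + 1) := mem_take_indexOf_succ hyw
  have hcy : 0 < Cnt w y (j + 1) := Cnt_pos_of_mem_take hyt
  have hcx : 0 < Cnt w x (j + 1) := lt_of_lt_of_le hcy (h (j + 1)).1
  have hxt : x ∈ w.take (j + 1) := mem_take_of_Cnt_pos hcx
  have hlt : w.idxOf x < j + 1 := indexOf_lt_of_mem_take hxt
  rcases lt_or_eq_of_le (Nat.lt_succ_iff.mp hlt) with h' | h'
  · exact h'
  · exfalso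
    have hgx : w[j]? = some x := by rw [← h']; exact getElem?_indexOf_self (List.mem_of_mem_take hxt)
    have hgy : w[j]? = some y := getElem?_indexOf_self hyw
    rw [hgx] at hgy
    exact hxy (Option.some.inj hgy)

/-- list of first occurrences, in order -/
def foList : List V → List V
  | [] => []
  | a :: l => a :: (foList l).filter (fun z => decide (z ≠ a))

lemma mem_foList (w : List V) (x : V) : x ∈ foList w ↔ x ∈ w := by
  induction w with
  | nil => simp [foList]
  | cons a l ih =>
    simp only [foList, List.mem_cons, List.mem_filter, decide_eq_true_eq]
    by_cases hx : x = a
    · simp [hx]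
    · simp [hx, ih]

lemma pairwise_foList (w : List V) :
    (foList w).Pairwise (fun a b => w.idxOf a < w.idxOf b) := by
  induction w with
  | nil => simp [foList]
  | cons a l ih =>
    rw [foList, List.pairwise_cons]
    constructor
    · intro b hb
      have hba : b ≠ a := by
        have := (List.mem_filter.mp hb).2; simpa using this
      rw [List.idxOf_cons_self, List.idxOf_cons_ne _ (fun h => hba h.symm)]
      omega
    · have hsub : ((foList l).filter (fun z => decide (z ≠ a))).Sublist (foList l) :=
        List.filter_sublist
      refine (List.Pairwise.sublist hsub ih).imp_of_mem ?_
      intro b c hb hc hbc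
      have hba : b ≠ a := by have := (List.mem_filter.mp hb).2; simpa using this
      have hca : c ≠ a := by have := (List.mem_filter.mp hc).2; simpa using this
      rw [List.idxOf_cons_ne _ (fun h => hba h.symm), List.idxOf_cons_ne _ (fun h => hca h.symm)]
      omega

section Step

variable {w : List V} {K : ℕ}

/-- the prefix of deficient letters -/
def sigmaL (w : List V) (K : ℕ) : List V :=
  (foList w).filter (fun a => decide (w.count a < K))

lemma mem_sigmaL {x : V} : x ∈ sigmaL w K ↔ x ∈ w ∧ w.count x < K := by
  simp [sigmaL, List.mem_filter, mem_foList]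

lemma pairwise_sigmaL :
    (sigmaL w K).Pairwise (fun a b => w.idxOf a < w.idxOf b) :=
  List.Pairwise.sublist (List.filter_sublist) (pairwise_foList w)

lemma nodup_sigmaL : (sigmaL w K).Nodup :=
  pairwise_sigmaL.imp_of_mem (fun _ _ h => fun hab => by subst hab; omega)

lemma sigma_take_mem {x y : V} (hx : x ∈ sigmaL w K) (hy : y ∈ sigmaL w K)
    (hlt : w.idxOf x < w.idxOf y) :
    ∀ n, y ∈ (sigmaL w K).take n → x ∈ (sigmaL w K).take n := by
  have hp := pairwise_sigmaL (w := w) (K := K)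
  revert hx hy
  generalize sigmaL w K = σ at *
  induction σ with
  | nil => intro _ hy n h; simp at h
  | cons a t ih =>
    intro hx hy n hmem
    match n with
    | 0 => simp at hmem
    | m + 1 =>
      rw [List.take_succ_cons] at hmem ⊢
      rw [List.pairwise_cons] at hp
      rcases List.mem_cons.mp hmem with rfl | hyt
      · -- y = a : impossible
        exfalso
        rcases List.mem_cons.mp hx with rfl | hxt
        · omega
        · exact absurd (hp.1 x hxt) (by omega)
      · rcases List.mem_cons.mp hx with rfl | hxt
        · exact List.mem_cons_self
        · have hyt' : y ∈ t := by
            rcases List.mem_cons.mp hy with rfl | h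
            · exfalso; rcases List.mem_cons.mp hx with rfl | hxt2
              · omega
              · exact absurd (hp.1 x hxt2) (by omega)
            · exact h
          exact List.mem_cons_of_mem _ (ih hp.2 hxt hyt' m hyt)

lemma sigma_take_count {x y : V} (hx : x ∈ sigmaL w K) (hy : y ∈ sigmaL w K)
    (hlt : w.idxOf x < w.idxOf y) (n : ℕ) :
    ((sigmaL w K).take n).count y ≤ ((sigmaL w K).take n).count x := by
  by_cases hyn : y ∈ (sigmaL w K).take n
  · have hxm : x ∈ (sigmaL w K).take n := sigma_take_mem hx hy hlt n hyn
    have h1 : ((sigmaL w K).take n).count y ≤ 1 := by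
      calc ((sigmaL w K).take n).count y ≤ (sigmaL w K).count y :=
            (List.take_sublist _ _).count_le y
        _ = 1 := List.count_eq_one_of_mem nodup_sigmaL hy
    have h2 : 1 ≤ ((sigmaL w K).take n).count x := by
      have := List.count_pos_iff.mpr hxm; omega
    omega
  · rw [List.count_eq_zero_of_not_mem (by simpa using hyn)]
    omega

-- count helpers for w' = σ ++ w
lemma Cnt_append_gen (σ w : List V) (z : V) (n : ℕ) :
    Cnt (σ ++ w) z n = (σ.take n).count z + Cnt w z (n - σ.length) := by
  rw [Cnt, List.take_append, List.count_append]; rfl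

lemma Cnt_append_low {σ w : List V} {z : V} {n : ℕ} (hn : n ≤ σ.length) :
    Cnt (σ ++ w) z n = (σ.take n).count z := by
  rw [Cnt_append_gen, Nat.sub_eq_zero_of_le hn]
  simp [Cnt]

lemma Cnt_append_high_mem {σ w : List V} {z : V} (hz : z ∈ σ) (hnd : σ.Nodup) (m : ℕ) :
    Cnt (σ ++ w) z (m + σ.length) = 1 + Cnt w z m := by
  rw [Cnt_append_gen, List.take_of_length_le (by omega), Nat.add_sub_cancel,
    List.count_eq_one_of_mem hnd hz]

lemma Cnt_append_high_not_mem {σ w : List V} {z : V} (hz : z ∉ σ) (m : ℕ) :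
    Cnt (σ ++ w) z (m + σ.length) = Cnt w z m := by
  rw [Cnt_append_gen, List.take_of_length_le (by omega), Nat.add_sub_cancel,
    List.count_eq_zero_of_not_mem hz]
  omega

lemma Cnt_full (w : List V) (z : V) : Cnt w z w.length = w.count z := by
  rw [Cnt, List.take_length]

end Step

section StepEquiv

variable {w : List V} {K : ℕ}

lemma count_take_le_one_sigma {z : V} (n : ℕ) :
    ((sigmaL w K).take n).count z ≤ 1 := by
  calc ((sigmaL w K).take n).count z ≤ (sigmaL w K).count z :=
        (List.take_sublist _ _).count_le z
    _ ≤ 1 := List.nodup_iff_count_le_one.mp nodup_sigmaL z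

lemma count_take_sigma_not_mem {z : V} (hz : z ∉ sigmaL w K) (n : ℕ) :
    ((sigmaL w K).take n).count z = 0 :=
  List.count_eq_zero_of_not_mem (fun h => hz (List.mem_of_mem_take h))

-- Case both not deficient
lemma step_nn {x y : V} (hx : x ∉ sigmaL w K) (hy : y ∉ sigmaL w K) :
    Arel (sigmaL w K ++ w) x y ↔ Arel w x y := by
  constructor
  · intro h m
    have := h (m + (sigmaL w K).length)
    rwa [Cnt_append_high_not_mem hx, Cnt_append_high_not_mem hy] at this
  · intro h n
    rcases le_or_gt n (sigmaL w K).length with hn | hn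
    · rw [Cnt_append_low hn, Cnt_append_low hn,
        count_take_sigma_not_mem hx, count_take_sigma_not_mem hy]
      omega
    · have hrw : n = (n - (sigmaL w K).length) + (sigmaL w K).length := by omega
      rw [hrw, Cnt_append_high_not_mem hx, Cnt_append_high_not_mem hy]
      exact h _

-- Case x deficient, y not (all letters in w, count y maximal)
lemma step_dn {x y : V} (hxy : x ≠ y) (hx : x ∈ sigmaL w K) (hy : y ∉ sigmaL w K)
    (hyw : y ∈ w) (hycount : w.count y = K) :
    (Arel (sigmaL w K ++ w) x y ∨ Arel (sigmaL w K ++ w) y x) ↔ (Arel w x y ∨ Arel w y x) := by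
  have hxK : w.count x < K := (mem_sigmaL.mp hx).2
  have hnAxy : ¬ Arel w x y := by
    intro h
    have := (h w.length).1
    rw [Cnt_full, Cnt_full] at this
    omega
  have hnAyx' : ¬ Arel (sigmaL w K ++ w) y x := by
    intro h
    set n := (sigmaL w K).idxOf x + 1 with hn
    have hnle : n ≤ (sigmaL w K).length := by
      have := List.idxOf_lt_length_iff.mpr hx; omega
    have h1 := (h n).1
    rw [Cnt_append_low hnle, Cnt_append_low hnle] at h1
    have hxmem : x ∈ (sigmaL w K).take n := mem_take_indexOf_succ hx
    have := List.count_pos_iff.mpr hxmem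
    rw [count_take_sigma_not_mem hy] at h1
    omega
  have hiff : Arel (sigmaL w K ++ w) x y ↔ Arel w y x := by
    constructor
    · intro h m
      have := h (m + (sigmaL w K).length)
      rw [Cnt_append_high_mem hx nodup_sigmaL, Cnt_append_high_not_mem hy] at this
      omega
    · intro h n
      rcases le_or_gt n (sigmaL w K).length with hnle | hnlt
      · rw [Cnt_append_low hnle, Cnt_append_low hnle, count_take_sigma_not_mem hy]
        have := count_take_le_one_sigma (w := w) (K := K) (z := x) n
        omega
      · have hrw : n = (n - (sigmaL w K).length) + (sigmaL w K).length := by omega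
        rw [hrw, Cnt_append_high_mem hx nodup_sigmaL, Cnt_append_high_not_mem hy]
        have := h (n - (sigmaL w K).length)
        omega
  constructor
  · rintro (h | h)
    · exact Or.inr (hiff.mp h)
    · exact absurd h hnAyx'
  · rintro (h | h)
    · exact absurd h hnAxy
    · exact Or.inl (hiff.mpr h)

-- Case both deficient
lemma step_dd {x y : V} (hxy : x ≠ y) (hx : x ∈ sigmaL w K) (hy : y ∈ sigmaL w K)
    (hyw : y ∈ w) :
    Arel (sigmaL w K ++ w) x y ↔ Arel w x y := by
  constructor
  · intro h m
    have := h (m + (sigmaL w K).length)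
    rw [Cnt_append_high_mem hx nodup_sigmaL, Cnt_append_high_mem hy nodup_sigmaL] at this
    omega
  · intro h n
    have hidx : w.idxOf x < w.idxOf y := Arel_indexOf_lt h hxy hyw
    rcases le_or_gt n (sigmaL w K).length with hnle | hnlt
    · rw [Cnt_append_low hnle, Cnt_append_low hnle]
      have h1 := sigma_take_count hx hy hidx n
      have h2 := count_take_le_one_sigma (w := w) (K := K) (z := x) n
      omega
    · have hrw : n = (n - (sigmaL w K).length) + (sigmaL w K).length := by omega
      rw [hrw, Cnt_append_high_mem hx nodup_sigmaL, Cnt_append_high_mem hy nodup_sigmaL]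
      have := h (n - (sigmaL w K).length)
      omega

lemma unif_step (hfull : ∀ x : V, x ∈ w)
    (hub : ∀ x : V, w.count x ≤ K) :
    ∀ x y : V, x ≠ y →
      ((Arel (sigmaL w K ++ w) x y ∨ Arel (sigmaL w K ++ w) y x) ↔
        (Arel w x y ∨ Arel w y x)) := by
  intro x y hxy
  by_cases hx : x ∈ sigmaL w K <;> by_cases hy : y ∈ sigmaL w K
  · rw [step_dd hxy hx hy (hfull y), step_dd hxy.symm hy hx (hfull x)]
  · have hyc : w.count y = K := by
      have := hub y
      rcases lt_or_eq_of_le this with h | h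
      · exact absurd (mem_sigmaL.mpr ⟨hfull y, h⟩) hy
      · exact h
    exact step_dn hxy hx hy (hfull y) hyc
  · have hxc : w.count x = K := by
      have := hub x
      rcases lt_or_eq_of_le this with h | h
      · exact absurd (mem_sigmaL.mpr ⟨hfull x, h⟩) hx
      · exact h
    rw [or_comm, or_comm (a := Arel w x y)]
    exact step_dn hxy.symm hy hx (hfull x) hxc
  · rw [step_nn hx hy, step_nn hy hx]

lemma unif_step_count (z : V) :
    (sigmaL w K ++ w).count z = w.count z + (if w.count z < K ∧ z ∈ w then 1 else 0) := by
  rw [List.count_append]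
  by_cases hz : z ∈ sigmaL w K
  · rw [List.count_eq_one_of_mem nodup_sigmaL hz]
    have := mem_sigmaL.mp hz
    simp [this.1, this.2]
    omega
  · rw [List.count_eq_zero_of_not_mem hz]
    rw [mem_sigmaL] at hz
    by_cases h1 : z ∈ w <;> by_cases h2 : w.count z < K <;> simp_all
end StepEquiv

/-- every fully-supported word can be made uniform, preserving the alternation relation -/
lemma exists_uniform (N : ℕ) : ∀ w : List V, (∀ x : V, x ∈ w) →
    (∑ a ∈ w.toFinset, (w.toFinset.sup w.count - w.count a)) = N →
    ∃ w' : List V, (∀ x : V, x ∈ w') ∧ (∀ x y : V, w'.count x = w'.count y) ∧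
      (∀ x y : V, x ≠ y → ((Arel w' x y ∨ Arel w' y x) ↔ (Arel w x y ∨ Arel w y x))) := by
  induction N using Nat.strong_induction_on with
  | _ N ih =>
    intro w hfull hN
    set K := w.toFinset.sup w.count with hK
    have hub : ∀ x : V, w.count x ≤ K :=
      fun x => Finset.le_sup (f := w.count) (List.mem_toFinset.mpr (hfull x))
    by_cases huni : ∀ a : V, w.count a = K
    · exact ⟨w, hfull, fun x y => by rw [huni x, huni y], fun x y _ => Iff.rfl⟩
    · push_neg at huni
      obtain ⟨a0, ha0⟩ := huni
      have ha0lt : w.count a0 < K := lt_of_le_of_ne (hub a0) ha0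
      set w1 := sigmaL w K ++ w with hw1
      have hfull1 : ∀ x : V, x ∈ w1 := fun x => List.mem_append_right _ (hfull x)
      have hcount1 : ∀ z : V, w1.count z = w.count z + (if w.count z < K then 1 else 0) := by
        intro z
        rw [unif_step_count]
        simp [hfull z]
      have htf : w1.toFinset = w.toFinset := by
        ext z; simp [List.mem_toFinset, hfull z, hfull1 z]
      -- the new sup is still K
      obtain ⟨b, hbmem, hbK⟩ := Finset.exists_mem_eq_sup w.toFinset
        ⟨a0, List.mem_toFinset.mpr (hfull a0)⟩ w.count
      have hKb : w.count b = K := hbK.symm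
      have hub1 : ∀ x : V, w1.count x ≤ K := by
        intro x
        rw [hcount1 x]
        rcases lt_or_eq_of_le (hub x) with h | h
        · simp [h]
        · simp [h]
      have hsup1 : w1.toFinset.sup w1.count = K := by
        apply le_antisymm
        · exact Finset.sup_le (fun z _ => hub1 z)
        · rw [htf]
          calc K = w1.count b := by rw [hcount1 b, hKb]; simp
            _ ≤ w.toFinset.sup w1.count := Finset.le_sup (f := w1.count) hbmem
      have hlt : (∑ a ∈ w1.toFinset, (w1.toFinset.sup w1.count - w1.count a)) < N := by
        rw [hsup1, htf, ← hN]
        apply Finset.sum_lt_sum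
        · intro i _
          rw [hcount1 i]
          split <;> omega
        · refine ⟨a0, List.mem_toFinset.mpr (hfull a0), ?_⟩
          rw [hcount1 a0]
          simp [ha0lt]
          omega
      obtain ⟨w', h1, h2, h3⟩ := ih _ hlt w1 hfull1 rfl
      refine ⟨w', h1, h2, fun x y hxy => ?_⟩
      rw [h3 x y hxy]
      exact unif_step hfull hub x y hxy

lemma Cnt_eq_count_of_le {u : List V} {z : V} {m : ℕ} (h : u.length ≤ m) :
    Cnt u z m = u.count z := by
  rw [Cnt, List.take_of_length_le h]

lemma Cnt_rot (u : List V) (a z : V) (m : ℕ) :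
    Cnt (u ++ [a]) z m = Cnt u z m +
      (if u.length < m ∧ a = z then 1 else 0) := by
  rw [Cnt, List.take_append, List.count_append, Cnt]
  congr 1
  rcases le_or_gt m u.length with h | h
  · rw [Nat.sub_eq_zero_of_le h]
    have hnm : ¬ (u.length < m) := by omega
    simp [hnm]
  · have h1 : 1 ≤ m - u.length := by omega
    rw [List.take_of_length_le (by simpa using h1)]
    rcases eq_or_ne a z with rfl | hne
    · simp [h]
    · simp [h, hne]

-- pairs not involving the rotated letter
lemma rot_ne {u : List V} {a x y : V} (hx : x ≠ a) (hy : y ≠ a) :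
    Arel (u ++ [a]) x y ↔ Arel (a :: u) x y := by
  have ex : ∀ (z : V), z ≠ a → ∀ m, Cnt (u ++ [a]) z m = Cnt u z m := by
    intro z hz m
    rw [Cnt_rot]
    have : a ≠ z := fun h => hz h.symm
    simp [this]
  have ec : ∀ (z : V), z ≠ a → ∀ m, Cnt (a :: u) z (m + 1) = Cnt u z m := by
    intro z hz m
    rw [Cnt_cons_succ]
    have : a ≠ z := fun h => hz h.symm
    simp [this]
  constructor
  · intro h n
    match n with
    | 0 => simp [Cnt_zero]
    | m + 1 =>
      rw [ec x hx, ec y hy]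
      have := h m
      rwa [ex x hx, ex y hy] at this
  · intro h m
    rw [ex x hx, ex y hy]
    have := h (m + 1)
    rwa [ec x hx, ec y hy] at this

-- pairs involving the rotated letter
lemma rot_a {u : List V} {a y : V} {Kc : ℕ} (hya : y ≠ a)
    (hcount : ∀ z : V, (a :: u).count z = Kc) :
    (Arel (u ++ [a]) a y ∨ Arel (u ++ [a]) y a) ↔
      (Arel (a :: u) a y ∨ Arel (a :: u) y a) := by
  have hau : u.count a + 1 = Kc := by
    have := hcount a; rw [List.count_cons_self] at this; omega
  have hyu : u.count y = Kc := by
    have := hcount y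
    rwa [List.count_cons_of_ne hya.symm] at this
  have ey : ∀ m, Cnt (u ++ [a]) y m = Cnt u y m := by
    intro m; rw [Cnt_rot]
    have : a ≠ y := fun h => hya h.symm
    simp [this]
  have ecy : ∀ m, Cnt (a :: u) y (m + 1) = Cnt u y m := by
    intro m; rw [Cnt_cons_succ]
    have : a ≠ y := fun h => hya h.symm
    simp [this]
  have eca : ∀ m, Cnt (a :: u) a (m + 1) = 1 + Cnt u a m := by
    intro m; rw [Cnt_cons_succ]; simp
  have h1 : ¬ Arel (a :: u) y a := by
    intro h
    have := (h 1).1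
    rw [eca 0, ecy 0, Cnt_zero, Cnt_zero] at this
    omega
  have h2 : ¬ Arel (u ++ [a]) a y := by
    intro h
    have := (h u.length).1
    rw [Cnt_rot, Cnt_rot] at this
    simp at this
    rw [Cnt_eq_count_of_le le_rfl, Cnt_eq_count_of_le le_rfl, hyu] at this
    omega
  have h3 : Arel (u ++ [a]) y a ↔ Arel (a :: u) a y := by
    constructor
    · intro h n
      match n with
      | 0 => simp [Cnt_zero]
      | m + 1 =>
        rw [eca m, ecy m]
        have := h m
        rw [ey m, Cnt_rot] at this
        rcases le_or_gt m u.length with hm | hm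
        · have hnm : ¬ (u.length < m) := by omega
          simp [hnm] at this
          omega
        · rw [Cnt_eq_count_of_le (le_of_lt hm), Cnt_eq_count_of_le (le_of_lt hm), hyu] at this ⊢
          simp [hm] at this
          omega
    · intro h m
      rw [ey m, Cnt_rot]
      rcases le_or_gt m u.length with hm | hm
      · have hnm : ¬ (u.length < m) := by omega
        simp [hnm]
        have := h (m + 1)
        rw [eca m, ecy m] at this
        omega
      · simp [hm]
        rw [Cnt_eq_count_of_le (le_of_lt hm), Cnt_eq_count_of_le (le_of_lt hm), hyu]
        omega
  constructor
  · rintro (h | h)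
    · exact absurd h h2
    · exact Or.inl (h3.mp h)
  · rintro (h | h)
    · exact Or.inr (h3.mpr h)
    · exact absurd h h1

lemma rotate_equiv {a : V} {u : List V} {Kc : ℕ}
    (hcount : ∀ z : V, (a :: u).count z = Kc) :
    ∀ x y : V, x ≠ y →
      ((Arel (u ++ [a]) x y ∨ Arel (u ++ [a]) y x) ↔
        (Arel (a :: u) x y ∨ Arel (a :: u) y x)) := by
  intro x y hxy
  rcases eq_or_ne x a with rfl | hx
  · exact rot_a hxy.symm hcount
  · rcases eq_or_ne y a with rfl | hy
    · have h := rot_a hx hcount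
      tauto
    · rw [rot_ne hx hy, rot_ne hy hx]

lemma indexOf_append_left {u : List V} {v : V} (h : v ∈ u) (t : List V) :
    (u ++ t).idxOf v = u.idxOf v := by
  induction u with
  | nil => simp at h
  | cons b u' ih =>
    rcases eq_or_ne b v with rfl | hb
    · simp [List.idxOf_cons_self]
    · rw [List.cons_append, List.idxOf_cons_ne _ hb, List.idxOf_cons_ne _ hb]
      rcases List.mem_cons.mp h with h' | h'
      · exact absurd h'.symm hb
      · rw [ih h']

lemma rotate_to_head (v : V) (Kc : ℕ) :
    ∀ (r : ℕ) (w : List V), (∀ x : V, x ∈ w) → (∀ z : V, w.count z = Kc) →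
      w.idxOf v ≤ r →
      ∃ w' : List V, (∀ x : V, x ∈ w') ∧ w'.head? = some v ∧ (∀ z : V, w'.count z = Kc) ∧
        (∀ x y : V, x ≠ y → ((Arel w' x y ∨ Arel w' y x) ↔ (Arel w x y ∨ Arel w y x))) := by
  intro r
  induction r with
  | zero =>
    intro w hfull hcount hidx
    cases w with
    | nil => simpa using hfull v
    | cons b u =>
      rcases eq_or_ne b v with rfl | hb
      · exact ⟨b :: u, hfull, by simp, hcount, fun _ _ _ => Iff.rfl⟩
      · rw [List.idxOf_cons_ne _ hb] at hidx
        omega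
  | succ r ih =>
    intro w hfull hcount hidx
    cases w with
    | nil => simpa using hfull v
    | cons b u =>
      rcases eq_or_ne b v with rfl | hb
      · exact ⟨b :: u, hfull, by simp, hcount, fun _ _ _ => Iff.rfl⟩
      · have hvu : v ∈ u := by
          rcases List.mem_cons.mp (hfull v) with h | h
          · exact absurd h.symm hb
          · exact h
        have hperm : (u ++ [b]).Perm (b :: u) := List.perm_append_singleton b u
        have hfull1 : ∀ x : V, x ∈ u ++ [b] := fun x => hperm.mem_iff.mpr (hfull x)
        have hcount1 : ∀ z : V, (u ++ [b]).count z = Kc := fun z => by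
          rw [hperm.count_eq]; exact hcount z
        have hidx1 : (u ++ [b]).idxOf v ≤ r := by
          rw [indexOf_append_left hvu]
          rw [List.idxOf_cons_ne _ hb] at hidx
          omega
        obtain ⟨w', h1, h2, h3, h4⟩ := ih (u ++ [b]) hfull1 hcount1 hidx1
        refine ⟨w', h1, h2, h3, fun x y hxy => ?_⟩
        rw [h4 x y hxy]
        exact rotate_equiv hcount x y hxy

theorem good_word_orientation (G : SimpleGraph V) (w : List V) (v : V)
    (hfull : ∀ x : V, x ∈ w)
    (hA : ∀ x y : V, x ≠ y → ((Arel w x y ∨ Arel w y x) ↔ G.Adj x y))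
    (hhead : w.head? = some v) :
    ∃ D, IsOrientation G D ∧ IsSemiTransitive D ∧ ∀ u, G.Adj v u → D v u := by
  set D : V → V → Prop := fun x y => G.Adj x y ∧ Arel w x y with hD
  have hDlt : ∀ {x y}, D x y → w.idxOf x < w.idxOf y := by
    intro x y ⟨hadj, har⟩
    exact Arel_indexOf_lt har hadj.ne (hfull y)
  refine ⟨D, ⟨fun u u' h => h.1, ?_⟩, ⟨?_, ?_⟩, ?_⟩
  · -- orientation: exactly one direction
    intro u u' hadj
    constructor
    · rintro ⟨_, har⟩ ⟨_, har'⟩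
      have h1 := Arel_indexOf_lt har hadj.ne (hfull u')
      have h2 := Arel_indexOf_lt har' hadj.ne' (hfull u)
      omega
    · intro hnd
      refine ⟨hadj, ?_⟩
      rcases (hA u u' hadj.ne).mpr hadj with h | h
      · exact h
      · exact absurd ⟨hadj.symm, h⟩ hnd
  · -- acyclicity
    intro z hz
    have : ∀ {a b}, Relation.TransGen D a b → w.idxOf a < w.idxOf b := by
      intro a b h
      induction h with
      | single h => exact hDlt h
      | tail _ h ih => exact lt_trans ih (hDlt h)
    exact lt_irrefl _ (this hz)
  · -- shortcut condition
    intro k p hpath hlong i j hij hjk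
    have step : ∀ i', i' < k → ∀ n, Cnt w (p (i' + 1)) n ≤ Cnt w (p i') n :=
      fun i' hi' n => ((hpath i' hi').2 n).1
    have chain : ∀ d i', i' + d ≤ k → ∀ n, Cnt w (p (i' + d)) n ≤ Cnt w (p i') n := by
      intro d
      induction d with
      | zero => intro i' _ n; simp
      | succ d ih =>
        intro i' h n
        calc Cnt w (p (i' + (d + 1))) n = Cnt w (p ((i' + d) + 1)) n := by ring_nf
          _ ≤ Cnt w (p (i' + d)) n := step _ (by omega) n
          _ ≤ Cnt w (p i') n := ih i' (by omega) n
    have chainIdx : ∀ d i', i' + d ≤ k → 0 < d →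
        w.idxOf (p i') < w.idxOf (p (i' + d)) := by
      intro d
      induction d with
      | zero => omega
      | succ d ih =>
        intro i' h _
        rw [show i' + (d+1) = i' + d + 1 from by omega]
        have hlast : w.idxOf (p (i' + d)) < w.idxOf (p (i' + d + 1)) :=
          hDlt (hpath (i' + d) (by omega))
        rcases Nat.eq_zero_or_pos d with rfl | hd
        · simpa using hlast
        · have := ih i' (by omega) hd
          have : w.idxOf (p i') < w.idxOf (p (i' + d)) := this
          omega
    have har : Arel w (p i) (p j) := by
      intro n
      constructor
      · have := chain (j - i) i (by omega) n
        rwa [Nat.add_sub_cancel' (le_of_lt hij)] at this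
      · have h1 : Cnt w (p i) n ≤ Cnt w (p 0) n := by
          have := chain i 0 (by omega) n
          simpa using this
        have h2 : Cnt w (p 0) n ≤ Cnt w (p k) n + 1 := (hlong.2 n).2
        have h3 : Cnt w (p k) n ≤ Cnt w (p j) n := by
          have := chain (k - j) j (by omega) n
          rwa [Nat.add_sub_cancel' hjk] at this
        omega
    have hne : p i ≠ p j := by
      have := chainIdx (j - i) i (by omega) (by omega)
      rw [Nat.add_sub_cancel' (le_of_lt hij)] at this
      intro h; rw [h] at this; omega
    exact ⟨(hA _ _ hne).mp (Or.inl har), har⟩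
  · -- source
    intro u hadj
    refine ⟨hadj, ?_⟩
    rcases (hA v u hadj.ne).mpr hadj with h | h
    · exact h
    · exfalso
      have h0 : w.idxOf v = 0 := by
        cases w with
        | nil => simp at hhead
        | cons a l =>
          simp only [List.head?_cons, Option.some.injEq] at hhead
          rw [← hhead, List.idxOf_cons_self]
      have := Arel_indexOf_lt h hadj.ne' (hfull v)
      omega


end Aux

/-- If `G` is word-representable then for every vertex `v` there is a
semi-transitive orientation of `G` with `v` as a source. -/
theorem stmt13 {V : Type*} [DecidableEq V] (G : SimpleGraph V)
    (h : WordRepresentable G) (v : V) :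
    ∃ D, IsOrientation G D ∧ IsSemiTransitive D ∧ ∀ u, G.Adj v u → D v u := by
  obtain ⟨w, hfull, hrep⟩ := h
  have hA : ∀ x y : V, x ≠ y → ((Arel w x y ∨ Arel w y x) ↔ G.Adj x y) := by
    intro x y hxy
    rw [← hrep x y hxy]
    exact (alternate_iff_Arel hxy w).symm
  obtain ⟨w1, hfull1, hcnt1, hequiv1⟩ :=
    exists_uniform (∑ a ∈ w.toFinset, (w.toFinset.sup w.count - w.count a)) w hfull rfl
  obtain ⟨w2, hfull2, hhead2, hcnt2, hequiv2⟩ :=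
    rotate_to_head v (w1.count v) (w1.idxOf v) w1 hfull1 (fun z => hcnt1 z v) le_rfl
  exact good_word_orientation G w2 v hfull2
    (fun x y hxy => by rw [hequiv2 x y hxy, hequiv1 x y hxy]; exact hA x y hxy) hhead2
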